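/- Let n ≥ 4 and let G be a finite simple graph that is independence equivalent to the cycle C_n. Then the number of triangles in G is at least the number of vertices of G whose degree is neither 1 nor 2; that is, t(G) ≥ |{v ∈ V(G) : deg(v) ∉ {1,2}}|. -/
import Mathlib

open SimpleGraph Polynomial Finset

/-- The number of independent sets of size `k` in the graph `G`. -/
noncomputable def indepCount {V : Type*} [Fintype V] (G : SimpleGraph V) (k : ℕ) : ℕ :=
  Nat.card {s : Finset V // s.card = k ∧ ∀ u ∈ s, ∀ v ∈ s, ¬ G.Adj u v}

/-- The graph `D_n`: a triangle on the vertices `0, 1, 2` together with the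
pendant path `2 - 3 - ⋯ - (n-1)`. -/
def dGraph (n : ℕ) : SimpleGraph (Fin n) :=
  SimpleGraph.fromRel (fun u v =>
    (u.val = 0 ∧ v.val = 1) ∨ (u.val = 0 ∧ v.val = 2) ∨ (u.val = 1 ∧ v.val = 2) ∨
    (2 ≤ u.val ∧ v.val = u.val + 1))

/-- The number of triangles (sets of three pairwise adjacent vertices) in `G`. -/
noncomputable def triangleCount {V : Type*} [Fintype V] (G : SimpleGraph V) : ℕ :=
  Nat.card {s : Finset V // s.card = 3 ∧ ∀ u ∈ s, ∀ v ∈ s, u ≠ v → G.Adj u v}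

section Aux

variable {V : Type*} [Fintype V] [DecidableEq V] (G : SimpleGraph V) [DecidableRel G.Adj]

lemma indepCount_eq_filter (k : ℕ) :
    indepCount G k
      = ((univ.powersetCard k).filter fun s => ∀ u ∈ s, ∀ v ∈ s, ¬ G.Adj u v).card := by
  rw [indepCount, Nat.card_eq_fintype_card, Fintype.card_subtype]
  congr 1
  ext s
  simp [Finset.mem_powersetCard_univ, and_comm]

lemma triangleCount_eq_filter :
    triangleCount G
      = ((univ.powersetCard 3).filter fun s => ∀ u ∈ s, ∀ v ∈ s, u ≠ v → G.Adj u v).card := by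
  rw [triangleCount, Nat.card_eq_fintype_card, Fintype.card_subtype]
  congr 1
  ext s
  simp [Finset.mem_powersetCard_univ, and_comm]

lemma card2_filter (u v : V) (huv : u ≠ v) :
    ((univ.powersetCard 2).filter fun s : Finset V => u ∈ s ∧ v ∈ s).card = 1 := by
  rw [Finset.card_eq_one]
  refine ⟨{u, v}, ?_⟩
  ext s
  simp only [mem_filter, Finset.mem_powersetCard_univ, mem_singleton]
  constructor
  · rintro ⟨hc, hu, hv⟩
    apply (Finset.eq_of_subset_of_card_le (fun x hx => ?_) (by rw [hc, Finset.card_pair huv])).symm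
    simp only [Finset.mem_insert, Finset.mem_singleton] at hx
    rcases hx with rfl | rfl <;> assumption
  · rintro rfl
    exact ⟨Finset.card_pair huv, by simp, by simp⟩

lemma card3_filter (u v : V) (huv : u ≠ v) :
    ((univ.powersetCard 3).filter fun s : Finset V => u ∈ s ∧ v ∈ s).card
      = Fintype.card V - 2 := by
  have h2 : (univ \ ({u, v} : Finset V)).card = Fintype.card V - 2 := by
    rw [Finset.card_sdiff_of_subset (by simp), Finset.card_pair huv, Finset.card_univ]
  rw [← h2]
  symm
  apply Finset.card_bij (fun w _ => insert u (insert v {w}))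
  · rintro w hw
    simp only [Finset.mem_sdiff, Finset.mem_insert, Finset.mem_singleton, not_or] at hw
    obtain ⟨-, hwu, hwv⟩ := hw
    simp only [mem_filter, Finset.mem_powersetCard_univ]
    refine ⟨?_, by simp, by simp⟩
    rw [Finset.card_insert_of_notMem (by simp [huv, Ne.symm hwu]),
      Finset.card_insert_of_notMem (by simp [Ne.symm hwv]), Finset.card_singleton]
  · rintro w hw w' hw' heq
    simp only [Finset.mem_sdiff, Finset.mem_insert, Finset.mem_singleton, not_or] at hw hw'
    have : w' ∈ insert u (insert v ({w} : Finset V)) := heq ▸ (by simp)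
    simp only [Finset.mem_insert, Finset.mem_singleton] at this
    rcases this with rfl | rfl | rfl
    · exact absurd rfl hw'.2.1
    · exact absurd rfl hw'.2.2
    · rfl
  · rintro s hs
    simp only [mem_filter, Finset.mem_powersetCard_univ] at hs
    obtain ⟨hc, hu, hv⟩ := hs
    have hsub : ({u, v} : Finset V) ⊆ s := by
      intro x hx; simp only [Finset.mem_insert, Finset.mem_singleton] at hx
      rcases hx with rfl | rfl <;> assumption
    have hcs : (s \ {u, v}).card = 1 := by
      rw [Finset.card_sdiff_of_subset hsub, hc, Finset.card_pair huv]
    obtain ⟨w, hw⟩ := Finset.card_eq_one.mp hcs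
    have hwmem : w ∈ s \ {u, v} := hw ▸ Finset.mem_singleton_self w
    refine ⟨w, ?_, ?_⟩
    · simp only [Finset.mem_sdiff] at hwmem ⊢
      exact ⟨Finset.mem_univ w, hwmem.2⟩
    · apply Finset.eq_of_subset_of_card_le
      · intro x hx
        simp only [Finset.mem_insert, Finset.mem_singleton] at hx
        rcases hx with rfl | rfl | rfl
        · exact hu
        · exact hv
        · exact (Finset.mem_sdiff.mp hwmem).1
      · rw [hc]
        apply le_of_eq
        symm
        simp only [Finset.mem_sdiff, Finset.mem_insert, Finset.mem_singleton, not_or] at hwmem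
        rw [Finset.card_insert_of_notMem (by simp [huv, Ne.symm hwmem.2.1]),
          Finset.card_insert_of_notMem (by simp [Ne.symm hwmem.2.2]), Finset.card_singleton]

lemma card_cherry (v : V) :
    ((univ.powersetCard 3).filter fun s : Finset V =>
        v ∈ s ∧ ∀ u ∈ s, u ≠ v → G.Adj v u).card = (G.degree v).choose 2 := by
  rw [← SimpleGraph.card_neighborFinset_eq_degree, ← Finset.card_powersetCard]
  symm
  apply Finset.card_bij (fun p _ => insert v p)
  · rintro p hp
    rw [Finset.mem_powersetCard] at hp
    obtain ⟨hsub, hcard⟩ := hp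
    have hv : v ∉ p := fun hv =>
      G.irrefl ((SimpleGraph.mem_neighborFinset G v v).mp (hsub hv))
    simp only [mem_filter, Finset.mem_powersetCard_univ]
    refine ⟨by rw [Finset.card_insert_of_notMem hv, hcard], by simp, ?_⟩
    intro u hu hne
    rcases Finset.mem_insert.mp hu with rfl | h
    · exact absurd rfl hne
    · simpa using hsub h
  · rintro p hp p' hp' heq
    rw [Finset.mem_powersetCard] at hp hp'
    have hv : v ∉ p := fun hv =>
      G.irrefl ((SimpleGraph.mem_neighborFinset G v v).mp (hp.1 hv))
    have hv' : v ∉ p' := fun hv =>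
      G.irrefl ((SimpleGraph.mem_neighborFinset G v v).mp (hp'.1 hv))
    rw [← Finset.erase_insert hv, ← Finset.erase_insert hv', heq]
  · rintro s hs
    simp only [mem_filter, Finset.mem_powersetCard_univ] at hs
    obtain ⟨hc, hv, hadj⟩ := hs
    refine ⟨s.erase v, ?_, ?_⟩
    · rw [Finset.mem_powersetCard]
      constructor
      · intro u hu
        obtain ⟨hne, hus⟩ := Finset.mem_erase.mp hu
        simpa using hadj u hus hne
      · rw [Finset.card_erase_of_mem hv, hc]
    · exact Finset.insert_erase hv

lemma sum_univ_mem (s : Finset V) (p : V → Prop) [DecidablePred p] :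
    (∑ v ∈ univ, if v ∈ s ∧ p v then (1:ℕ) else 0) = ∑ v ∈ s, if p v then 1 else 0 := by
  simp only [Finset.sum_boole, Nat.cast_id]
  congr 1
  ext v
  simp

lemma double_ite (A : Finset V) (q : V → V → Prop) [DecidableRel q] :
    (∑ u ∈ A, ∑ v ∈ A, if q u v then (1:ℕ) else 0)
      = ((A ×ˢ A).filter fun p => q p.1 p.2).card := by
  rw [← Finset.sum_product']
  simp [Finset.sum_boole]

lemma ePU_eq (s : Finset V) :
    (∑ u ∈ univ, ∑ v ∈ univ, if u ∈ s ∧ v ∈ s ∧ G.Adj u v then (1:ℕ) else 0)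
      = ∑ u ∈ s, ∑ v ∈ s, if G.Adj u v then 1 else 0 := by
  rw [double_ite, double_ite]
  congr 1
  ext p
  simp only [mem_filter, Finset.mem_product, Finset.mem_univ, true_and]
  tauto

lemma sumE {k : ℕ} (c : ℕ)
    (hcard : ∀ u v : V, u ≠ v →
      ((univ.powersetCard k).filter fun s : Finset V => u ∈ s ∧ v ∈ s).card = c) :
    (∑ s ∈ univ.powersetCard k, ∑ u ∈ univ, ∑ v ∈ univ,
        if u ∈ s ∧ v ∈ s ∧ G.Adj u v then (1:ℕ) else 0)
      = c * ∑ u : V, G.degree u := by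
  rw [Finset.sum_comm]
  rw [Finset.mul_sum]
  refine Finset.sum_congr rfl fun u _ => ?_
  rw [Finset.sum_comm]
  have hdeg : (G.degree u) = ∑ v ∈ univ, if G.Adj u v then (1:ℕ) else 0 := by
    rw [Finset.sum_boole, Nat.cast_id, ← SimpleGraph.card_neighborFinset_eq_degree]
    congr 1
    ext v
    simp
  rw [hdeg, Finset.mul_sum]
  refine Finset.sum_congr rfl fun v _ => ?_
  by_cases hadj : G.Adj u v
  · have hne : u ≠ v := hadj.ne
    simp only [hadj, and_true, if_true, mul_one]
    rw [Finset.sum_boole, Nat.cast_id]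
    exact hcard u v hne
  · simp [hadj]

lemma sum_swap_card {k : ℕ} (P : Finset V → V → Prop) [∀ s v, Decidable (P s v)]
    (f : V → ℕ)
    (hcard : ∀ v, ((univ.powersetCard k).filter fun s => P s v).card = f v) :
    ∑ s ∈ univ.powersetCard k, ∑ v ∈ univ, (if P s v then (1:ℕ) else 0)
      = ∑ v ∈ univ, f v := by
  rw [Finset.sum_comm]
  refine Finset.sum_congr rfl fun v _ => ?_
  simp only [Finset.sum_boole, Nat.cast_id]
  exact hcard v

set_option maxHeartbeats 1000000 in
lemma pw3 (s : Finset V) (hs : s.card = 3) :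
    2 + 2 * (∑ v ∈ s, if (∀ u ∈ s, u ≠ v → G.Adj v u) then 1 else 0)
      = (∑ u ∈ s, ∑ v ∈ s, if G.Adj u v then 1 else 0)
        + 2 * (if (∀ u ∈ s, ∀ v ∈ s, ¬ G.Adj u v) then 1 else 0)
        + 2 * (if (∀ u ∈ s, ∀ v ∈ s, u ≠ v → G.Adj u v) then 1 else 0) := by
  obtain ⟨a, b, c, hab, hac, hbc, rfl⟩ := Finset.card_eq_three.mp hs
  have h1 : a ∉ ({b, c} : Finset V) := by simp [hab, hac]
  have h2 : b ∉ ({c} : Finset V) := by simp [hbc]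
  have sAB : G.Adj b a ↔ G.Adj a b := G.adj_comm b a
  have sAC : G.Adj c a ↔ G.Adj a c := G.adj_comm c a
  have sBC : G.Adj c b ↔ G.Adj b c := G.adj_comm c b
  by_cases hAB : G.Adj a b <;> by_cases hAC : G.Adj a c <;> by_cases hBC : G.Adj b c <;>
    simp only [Finset.sum_insert h1, Finset.sum_insert h2, Finset.sum_singleton,
      Finset.forall_mem_insert, Finset.mem_singleton, Finset.mem_insert] <;>
    simp [hab, hac, hbc, hab.symm, hac.symm, hbc.symm, hAB, hAC, hBC,
      sAB, sAC, sBC, G.irrefl]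

set_option maxHeartbeats 1000000 in
lemma pw2 (s : Finset V) (hs : s.card = 2) :
    (∑ u ∈ s, ∑ v ∈ s, if G.Adj u v then 1 else 0)
      + 2 * (if (∀ u ∈ s, ∀ v ∈ s, ¬ G.Adj u v) then 1 else 0) = 2 := by
  obtain ⟨a, b, hab, rfl⟩ := Finset.card_eq_two.mp hs
  have h1 : a ∉ ({b} : Finset V) := by simp [hab]
  have sAB : G.Adj b a ↔ G.Adj a b := G.adj_comm b a
  by_cases hAB : G.Adj a b <;>
    simp only [Finset.sum_insert h1, Finset.sum_singleton,
      Finset.forall_mem_insert, Finset.mem_singleton, Finset.mem_insert] <;>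
    simp [hab, hab.symm, hAB, sAB, G.irrefl]

/-- `i₁ = |V|`. -/
lemma indepCount_one : indepCount G 1 = Fintype.card V := by
  rw [indepCount_eq_filter]
  have hall : ((univ.powersetCard 1).filter fun s : Finset V => ∀ u ∈ s, ∀ v ∈ s, ¬ G.Adj u v)
      = univ.powersetCard 1 := by
    apply Finset.filter_true_of_mem
    intro s hs
    rw [Finset.mem_powersetCard_univ] at hs
    obtain ⟨a, rfl⟩ := Finset.card_eq_one.mp hs
    intro u hu v hv
    simp only [Finset.mem_singleton] at hu hv
    subst hu; subst hv
    exact G.irrefl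
  rw [hall, Finset.card_powersetCard, Finset.card_univ, Nat.choose_one_right]

/-- `2 i₂ + Σ deg = 2 C(N,2)`. -/
lemma indepCount_two :
    2 * indepCount G 2 + (∑ u : V, G.degree u) = 2 * (Fintype.card V).choose 2 := by
  have key : ∑ s ∈ univ.powersetCard 2,
      ((∑ u ∈ s, ∑ v ∈ s, if G.Adj u v then 1 else 0)
        + 2 * (if (∀ u ∈ s, ∀ v ∈ s, ¬ G.Adj u v) then 1 else 0)) = 
      ∑ s ∈ (univ : Finset V).powersetCard 2, 2 := by
    refine Finset.sum_congr rfl fun s hs => ?_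
    rw [Finset.mem_powersetCard_univ] at hs
    exact pw2 G s hs
  rw [Finset.sum_add_distrib, ← Finset.mul_sum] at key
  have e1 : (∑ s ∈ univ.powersetCard 2, ∑ u ∈ s, ∑ v ∈ s, if G.Adj u v then (1:ℕ) else 0)
      = ∑ u : V, G.degree u := by
    rw [show (∑ s ∈ univ.powersetCard 2, ∑ u ∈ s, ∑ v ∈ s, if G.Adj u v then (1:ℕ) else 0)
        = ∑ s ∈ univ.powersetCard 2, ∑ u ∈ univ, ∑ v ∈ univ,
            if u ∈ s ∧ v ∈ s ∧ G.Adj u v then (1:ℕ) else 0 from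
      Finset.sum_congr rfl fun s _ => (ePU_eq G s).symm]
    rw [sumE G 1 (card2_filter), one_mul]
  have e2 : (∑ s ∈ univ.powersetCard 2, if (∀ u ∈ s, ∀ v ∈ s, ¬ G.Adj u v) then (1:ℕ) else 0)
      = indepCount G 2 := by
    rw [Finset.sum_boole, Nat.cast_id, indepCount_eq_filter]
  rw [e1, e2, Finset.sum_const, Finset.card_powersetCard, Finset.card_univ, smul_eq_mul,
    mul_comm] at key
  omega

/-- the master identity: `2 C(N,3) + 2 Σ C(deg,2) = (N-2) Σ deg + 2 i₃ + 2 t`. -/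
lemma master :
    2 * (Fintype.card V).choose 3 + 2 * (∑ v : V, (G.degree v).choose 2)
      = (Fintype.card V - 2) * (∑ u : V, G.degree u)
        + 2 * indepCount G 3 + 2 * triangleCount G := by
  have key : ∑ s ∈ univ.powersetCard 3,
      (2 + 2 * (∑ v ∈ s, if (∀ u ∈ s, u ≠ v → G.Adj v u) then 1 else 0)) =
      ∑ s ∈ univ.powersetCard 3,
      ((∑ u ∈ s, ∑ v ∈ s, if G.Adj u v then 1 else 0)
        + 2 * (if (∀ u ∈ s, ∀ v ∈ s, ¬ G.Adj u v) then 1 else 0)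
        + 2 * (if (∀ u ∈ s, ∀ v ∈ s, u ≠ v → G.Adj u v) then 1 else 0)) := by
    refine Finset.sum_congr rfl fun s hs => ?_
    rw [Finset.mem_powersetCard_univ] at hs
    exact pw3 G s hs
  rw [Finset.sum_add_distrib, Finset.sum_add_distrib, Finset.sum_add_distrib,
    ← Finset.mul_sum, ← Finset.mul_sum, ← Finset.mul_sum] at key
  have e1 : (∑ s ∈ univ.powersetCard 3, ∑ u ∈ s, ∑ v ∈ s, if G.Adj u v then (1:ℕ) else 0)
      = (Fintype.card V - 2) * ∑ u : V, G.degree u := by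
    rw [show (∑ s ∈ univ.powersetCard 3, ∑ u ∈ s, ∑ v ∈ s, if G.Adj u v then (1:ℕ) else 0)
        = ∑ s ∈ univ.powersetCard 3, ∑ u ∈ univ, ∑ v ∈ univ,
            if u ∈ s ∧ v ∈ s ∧ G.Adj u v then (1:ℕ) else 0 from
      Finset.sum_congr rfl fun s _ => (ePU_eq G s).symm]
    exact sumE G _ (card3_filter)
  have e2 : (∑ s ∈ univ.powersetCard 3, if (∀ u ∈ s, ∀ v ∈ s, ¬ G.Adj u v) then (1:ℕ) else 0)
      = indepCount G 3 := by
    rw [Finset.sum_boole, Nat.cast_id, indepCount_eq_filter]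
  have e3 : (∑ s ∈ univ.powersetCard 3,
        if (∀ u ∈ s, ∀ v ∈ s, u ≠ v → G.Adj u v) then (1:ℕ) else 0)
      = triangleCount G := by
    rw [Finset.sum_boole, Nat.cast_id, triangleCount_eq_filter]
  have e4 : (∑ s ∈ univ.powersetCard 3,
        ∑ v ∈ s, if (∀ u ∈ s, u ≠ v → G.Adj v u) then (1:ℕ) else 0)
      = ∑ v : V, (G.degree v).choose 2 := by
    rw [show (∑ s ∈ univ.powersetCard 3,
          ∑ v ∈ s, if (∀ u ∈ s, u ≠ v → G.Adj v u) then (1:ℕ) else 0)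
        = ∑ s ∈ univ.powersetCard 3, ∑ v ∈ univ,
            if v ∈ s ∧ ∀ u ∈ s, u ≠ v → G.Adj v u then (1:ℕ) else 0 from
      Finset.sum_congr rfl fun s _ => (sum_univ_mem s _).symm]
    exact sum_swap_card (fun s v => v ∈ s ∧ ∀ u ∈ s, u ≠ v → G.Adj v u) _
      (card_cherry G)
  rw [e1, e2, e3, e4, Finset.sum_const, Finset.card_powersetCard, Finset.card_univ,
    smul_eq_mul, mul_comm] at key
  omega

end Aux

lemma pointwise_deg (d : ℕ) :
    1 + (if d ≠ 1 ∧ d ≠ 2 then 1 else 0) + d ≤ d.choose 2 + 2 := by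
  rcases d with _ | _ | _ | d
  · simp
  · simp
  · simp
  · rw [show d + 1 + 1 + 1 = d + 3 from by omega]
    have h : d + 3 ≤ (d + 3).choose 2 := by
      rw [Nat.choose_two_right]
      rw [Nat.le_div_iff_mul_le (by norm_num)]
      have : d + 3 - 1 = d + 2 := rfl
      rw [this]
      nlinarith
    simp only [if_pos (by omega : (d+3 : ℕ) ≠ 1 ∧ (d+3:ℕ) ≠ 2)]
    omega

theorem triangleCount_ge_of_indepEquiv_cycle {V : Type*} [Fintype V] (G : SimpleGraph V)
    [DecidableRel G.Adj] (n : ℕ) (hn : 4 ≤ n)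
    (h : ∀ k, indepCount G k = indepCount (SimpleGraph.cycleGraph n) k) :
    (Finset.univ.filter fun v : V => G.degree v ≠ 1 ∧ G.degree v ≠ 2).card
      ≤ triangleCount G := by
  classical
  obtain ⟨m, rfl⟩ : ∃ m, n = m + 3 := ⟨n - 3, by omega⟩
  set n := m + 3 with hn3
  -- facts about the cycle graph
  have hdegC : ∀ v : Fin n, (SimpleGraph.cycleGraph n).degree v = 2 := fun v =>
    SimpleGraph.cycleGraph_degree_three_le
  have hNC : Fintype.card (Fin n) = n := Fintype.card_fin n
  have hsumdegC : (∑ u : Fin n, (SimpleGraph.cycleGraph n).degree u) = 2 * n := by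
    simp [hdegC, Finset.sum_const, hNC, mul_comm]
  have hsumchC : (∑ v : Fin n, ((SimpleGraph.cycleGraph n).degree v).choose 2) = n := by
    simp [hdegC, Finset.sum_const, hNC]
  -- |V| = n
  have hN : Fintype.card V = n := by
    have := h 1
    rw [indepCount_one G, indepCount_one (SimpleGraph.cycleGraph n), hNC] at this
    exact this
  -- Σ deg_G = 2n
  have h2G := indepCount_two G
  have h2C := indepCount_two (SimpleGraph.cycleGraph n)
  rw [hN] at h2G
  rw [hNC, hsumdegC] at h2C
  rw [h 2] at h2G
  have hsumdegG : (∑ u : V, G.degree u) = 2 * n := by omega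
  -- the master identities
  have h3G := master G
  have h3C := master (SimpleGraph.cycleGraph n)
  rw [hN, hsumdegG] at h3G
  rw [hNC, hsumdegC, hsumchC] at h3C
  rw [h 3] at h3G
  -- Σ_G C(deg,2) ≤ n + t_G
  have hkey : (∑ v : V, (G.degree v).choose 2) ≤ n + triangleCount G := by omega
  -- per-vertex bound
  have hpv : (∑ v : V, (1 + (if G.degree v ≠ 1 ∧ G.degree v ≠ 2 then 1 else 0) + G.degree v))
      ≤ ∑ v : V, ((G.degree v).choose 2 + 2) :=
    Finset.sum_le_sum fun v _ => pointwise_deg (G.degree v)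
  have hBcard : (Finset.univ.filter fun v : V => G.degree v ≠ 1 ∧ G.degree v ≠ 2).card
      = ∑ v : V, (if G.degree v ≠ 1 ∧ G.degree v ≠ 2 then 1 else 0) := by
    rw [Finset.sum_boole, Nat.cast_id]
  rw [Finset.sum_add_distrib, Finset.sum_add_distrib, Finset.sum_add_distrib] at hpv
  simp only [Finset.sum_const, Finset.card_univ, smul_eq_mul, mul_one] at hpv
  rw [hN, hsumdegG, ← hBcard] at hpv
  omega
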